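/- Let A be ν×ν, B be ν×m, C be p×ν, D be p×m complex matrices with R = [[A, B], [C, D]] satisfying R R* = I_{ν+p}, and assume every eigenvalue of A has modulus strictly less than 1. Then: (a) any ν×ν complex matrix W satisfying the Stein equation W − A W A* = B B* equals I_ν (i.e., the controllability Gramian is the identity); (b) any Hermitian ν×ν matrix W satisfying the Stein equation W − A* W A = C* C satisfies W ≤ I_ν, i.e., I_ν − W is positive semidefinite (the observability Gramian is a contraction). -/

import Mathlib

open Matrix ComplexOrder Filter Topology
open scoped ENNReal NNReal

section NormAux

attribute [local instance] Matrix.linftyOpNormedRing Matrix.linftyOpNormedAlgebra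

private lemma aux_entry_tendsto {ν : ℕ} (A : Matrix (Fin ν) (Fin ν) ℂ)
    (hA : ∀ μ ∈ spectrum ℂ A, ‖μ‖ < 1) (i j : Fin ν) :
    Tendsto (fun n => (A ^ n) i j) atTop (nhds (0 : ℂ)) := by
  haveI : CompleteSpace (Matrix (Fin ν) (Fin ν) ℂ) := FiniteDimensional.complete ℂ _
  have hr : spectralRadius ℂ A < 1 := by
    rw [spectralRadius]
    rcases (spectrum ℂ A).eq_empty_or_nonempty with h | h
    · simp [h]
    · obtain ⟨μ₀, hμ₀m, hmax⟩ :=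
        Set.exists_max_image (spectrum ℂ A) (fun μ => ‖μ‖₊) (A.finite_spectrum) h
      calc (⨆ k ∈ spectrum ℂ A, (‖k‖₊ : ℝ≥0∞)) ≤ (‖μ₀‖₊ : ℝ≥0∞) := by
            apply iSup₂_le; intro k hk; exact_mod_cast hmax k hk
        _ < 1 := by
            have := hA μ₀ hμ₀m
            exact_mod_cast this
  obtain ⟨c, hc1, hc2⟩ := exists_between hr
  have hctop : c ≠ ⊤ := (hc2.trans_le le_top).ne
  have hG := spectrum.pow_nnnorm_pow_one_div_tendsto_nhds_spectralRadius A
  have hev : ∀ᶠ n : ℕ in atTop, ((‖A ^ n‖₊ : ℝ≥0∞) ^ (1 / (n : ℝ))) < c :=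
    hG.eventually_lt_const hc1
  have hbound : ∀ᶠ n : ℕ in atTop, ‖(A ^ n) i j‖ ≤ (c.toNNReal : ℝ) ^ n := by
    filter_upwards [hev, eventually_ge_atTop 1] with n hn hn1
    have hne : (n : ℝ) ≠ 0 := Nat.cast_ne_zero.mpr (by omega)
    have h1 : (‖A ^ n‖₊ : ℝ≥0∞) < c ^ (n : ℝ) := by
      have := ENNReal.rpow_lt_rpow hn (by positivity : (0:ℝ) < n)
      rwa [← ENNReal.rpow_mul, one_div, inv_mul_cancel₀ hne,
        ENNReal.rpow_one] at this
    have h2 : ‖A ^ n‖₊ ≤ c.toNNReal ^ n := by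
      have : (‖A ^ n‖₊ : ℝ≥0∞) ≤ (c.toNNReal : ℝ≥0∞) ^ n := by
        rw [ENNReal.coe_toNNReal hctop, ← ENNReal.rpow_natCast]
        exact h1.le
      exact_mod_cast this
    have hentry : ‖(A ^ n) i j‖₊ ≤ ‖A ^ n‖₊ := by
      rw [Matrix.linfty_opNNNorm_def]
      calc ‖(A ^ n) i j‖₊ ≤ ∑ j', ‖(A ^ n) i j'‖₊ :=
            Finset.single_le_sum (f := fun j' => ‖(A ^ n) i j'‖₊) (fun _ _ => by positivity) (Finset.mem_univ j)
        _ ≤ _ := Finset.le_sup (f := fun i => ∑ j', ‖(A ^ n) i j'‖₊) (Finset.mem_univ i)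
    calc ‖(A ^ n) i j‖ ≤ ‖A ^ n‖ := by exact_mod_cast hentry
      _ ≤ ((c.toNNReal : ℝ)) ^ n := by exact_mod_cast h2
  have hgeo : Tendsto (fun n : ℕ => (c.toNNReal : ℝ) ^ n) atTop (nhds 0) := by
    apply tendsto_pow_atTop_nhds_zero_of_lt_one (by positivity)
    have : c < (1 : ℝ≥0∞) := hc2
    have h1 : c.toNNReal < 1 := by
      rw [← ENNReal.coe_lt_coe, ENNReal.coe_toNNReal hctop]
      simpa using this
    exact_mod_cast h1
  exact squeeze_zero_norm' hbound hgeo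

end NormAux

private lemma aux_pow_tendsto {ν : ℕ} (A : Matrix (Fin ν) (Fin ν) ℂ)
    (hA : ∀ μ ∈ spectrum ℂ A, ‖μ‖ < 1) :
    Tendsto (fun n => A ^ n) atTop (nhds (0 : Matrix (Fin ν) (Fin ν) ℂ)) := by
  exact tendsto_pi_nhds.mpr fun i => tendsto_pi_nhds.mpr fun j => aux_entry_tendsto A hA i j

private lemma aux_spectrum_conjTranspose {ν : ℕ} (A : Matrix (Fin ν) (Fin ν) ℂ)
    (hA : ∀ μ ∈ spectrum ℂ A, ‖μ‖ < 1) : ∀ μ ∈ spectrum ℂ Aᴴ, ‖μ‖ < 1 := by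
  intro μ hμ
  have h : star μ ∈ spectrum ℂ A := by
    rw [spectrum.mem_iff] at hμ ⊢
    intro hu
    exact hμ (by
      simpa [Matrix.conjTranspose_sub, Matrix.algebraMap_eq_diagonal,
        Matrix.diagonal_conjTranspose, Pi.star_def, Pi.algebraMap_apply, Pi.algebraMap_def, star_star] using (Matrix.isUnit_conjTranspose _).mpr hu)
  simpa using hA _ h

private lemma aux_dot {ν : ℕ} (M S : Matrix (Fin ν) (Fin ν) ℂ) (v : Fin ν → ℂ) :
    star v ⬝ᵥ ((Mᴴ * S * M) *ᵥ v) = star (M *ᵥ v) ⬝ᵥ (S *ᵥ (M *ᵥ v)) := by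
  simp only [Matrix.star_mulVec, Matrix.dotProduct_mulVec, Matrix.vecMul_vecMul,
    Matrix.mul_assoc]

theorem coisometric_realization_gramians
    (ν p m : ℕ)
    (A : Matrix (Fin ν) (Fin ν) ℂ) (B : Matrix (Fin ν) (Fin m) ℂ)
    (C : Matrix (Fin p) (Fin ν) ℂ) (D : Matrix (Fin p) (Fin m) ℂ)
    (hR : Matrix.fromBlocks A B C D * (Matrix.fromBlocks A B C D)ᴴ = 1)
    (hA : ∀ μ ∈ spectrum ℂ A, ‖μ‖ < 1) :
    (∀ W : Matrix (Fin ν) (Fin ν) ℂ, W - A * W * Aᴴ = B * Bᴴ → W = 1) ∧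
    (∀ W : Matrix (Fin ν) (Fin ν) ℂ, Wᴴ = W → W - Aᴴ * W * A = Cᴴ * C →
      (1 - W).PosSemidef) := by
  classical
  have hR' := hR
  rw [Matrix.fromBlocks_conjTranspose, Matrix.fromBlocks_multiply,
    ← Matrix.fromBlocks_one] at hR'
  obtain ⟨h11, h12, h21, h22⟩ := Matrix.fromBlocks_inj.mp hR'
  constructor
  · -- part (a)
    intro W hW
    have h1 : A * W * Aᴴ = W - B * Bᴴ := by rw [← hW]; abel
    have h2 : A * Aᴴ = 1 - B * Bᴴ := eq_sub_of_add_eq h11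
    have hX : W - 1 = A * (W - 1) * Aᴴ := by
      calc W - 1 = (W - B * Bᴴ) - (1 - B * Bᴴ) := by abel
        _ = A * W * Aᴴ - A * Aᴴ := by rw [h1, h2]
        _ = A * (W - 1) * Aᴴ := by
            rw [Matrix.mul_sub, Matrix.sub_mul, Matrix.mul_one]
    have hXn : ∀ n : ℕ, W - 1 = A ^ n * (W - 1) * (Aᴴ) ^ n := by
      intro n
      induction n with
      | zero => simp
      | succ n ih =>
        conv_lhs => rw [hX, ih]
        rw [pow_succ', pow_succ]
        noncomm_ring
    have hT : Tendsto (fun n : ℕ => A ^ n * (W - 1) * (Aᴴ) ^ n) atTop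
        (nhds ((0 : Matrix (Fin ν) (Fin ν) ℂ) * (W - 1) * 0)) :=
      ((aux_pow_tendsto A hA).mul tendsto_const_nhds).mul
        (aux_pow_tendsto Aᴴ (aux_spectrum_conjTranspose A hA))
    rw [zero_mul, mul_zero] at hT
    have hX0 : W - 1 = 0 := by
      refine tendsto_nhds_unique ?_ hT
      have : (fun n : ℕ => A ^ n * (W - 1) * (Aᴴ) ^ n) = fun _ => W - 1 :=
        funext fun n => (hXn n).symm
      rw [this]
      exact tendsto_const_nhds
    rw [sub_eq_zero] at hX0
    exact hX0
  · -- part (b)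
    intro W hW hSt
    set R : Matrix (Fin ν ⊕ Fin p) (Fin ν ⊕ Fin m) ℂ := Matrix.fromBlocks A B C D with hRdef
    have hPP : Rᴴ * R * (Rᴴ * R) = Rᴴ * R := by
      conv_lhs => rw [Matrix.mul_assoc]
      rw [← Matrix.mul_assoc R Rᴴ R, hR, Matrix.one_mul]
    have hPH : (Rᴴ * R)ᴴ = Rᴴ * R := by
      rw [Matrix.conjTranspose_mul, Matrix.conjTranspose_conjTranspose]
    have hfact : (1 - Rᴴ * R)ᴴ * (1 - Rᴴ * R) = 1 - Rᴴ * R := by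
      rw [Matrix.conjTranspose_sub, Matrix.conjTranspose_one, hPH,
        Matrix.sub_mul, Matrix.one_mul, Matrix.mul_sub, Matrix.mul_one, hPP]
      abel
    have hPSD : (1 - Rᴴ * R).PosSemidef := by
      rw [← hfact]; exact Matrix.posSemidef_conjTranspose_mul_self _
    have hQ : (1 - (Aᴴ * A + Cᴴ * C)).PosSemidef := by
      have hsub := hPSD.submatrix (Sum.inl : Fin ν → Fin ν ⊕ Fin m)
      have heq : (1 - Rᴴ * R).submatrix Sum.inl Sum.inl
          = 1 - (Aᴴ * A + Cᴴ * C) := by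
        have hPblocks : Rᴴ * R = Matrix.fromBlocks (Aᴴ * A + Cᴴ * C) (Aᴴ * B + Cᴴ * D)
            (Bᴴ * A + Dᴴ * C) (Bᴴ * B + Dᴴ * D) := by
          rw [hRdef, Matrix.fromBlocks_conjTranspose, Matrix.fromBlocks_multiply]
        ext i j
        simp [hPblocks, Matrix.one_apply]
      rwa [heq] at hsub
    have hAWA : Aᴴ * W * A = W - Cᴴ * C := by rw [← hSt]; abel
    have hV : (1 : Matrix (Fin ν) (Fin ν) ℂ) - W
        = Aᴴ * (1 - W) * A + (1 - (Aᴴ * A + Cᴴ * C)) := by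
      rw [Matrix.mul_sub, Matrix.mul_one, Matrix.sub_mul, hAWA]
      abel
    have hH : (1 - W).IsHermitian := by
      simp [Matrix.IsHermitian, Matrix.conjTranspose_sub, hW]
    refine Matrix.PosSemidef.of_dotProduct_mulVec_nonneg hH fun x => ?_
    set y : ℕ → (Fin ν → ℂ) := fun n => (A ^ n) *ᵥ x with hy
    set g : ℕ → ℂ := fun n => star (y n) ⬝ᵥ ((1 - W) *ᵥ y n) with hg
    have hystep : ∀ n, y (n + 1) = A *ᵥ y n := by
      intro n
      simp only [hy, Matrix.mulVec_mulVec, ← pow_succ']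
    have hstep : ∀ n, g n = g (n + 1)
        + star (y n) ⬝ᵥ ((1 - (Aᴴ * A + Cᴴ * C)) *ᵥ y n) := by
      intro n
      have e2 : star (y n) ⬝ᵥ ((Aᴴ * (1 - W) * A) *ᵥ y n) = g (n + 1) := by
        rw [aux_dot A (1 - W) (y n), ← hystep n, hg]
      calc g n = star (y n) ⬝ᵥ ((Aᴴ * (1 - W) * A) *ᵥ y n)
            + star (y n) ⬝ᵥ ((1 - (Aᴴ * A + Cᴴ * C)) *ᵥ y n) := by
            simp only [hg]
            conv_lhs => rw [hV]
            rw [Matrix.add_mulVec, dotProduct_add]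
        _ = g (n + 1) + star (y n) ⬝ᵥ ((1 - (Aᴴ * A + Cᴴ * C)) *ᵥ y n) := by rw [e2]
    have hmono : ∀ n, (g n).re ≤ (g 0).re := by
      intro n
      induction n with
      | zero => exact le_refl _
      | succ n ih =>
        have hq := hQ.dotProduct_mulVec_nonneg (y n)
        have hqre : 0 ≤ (star (y n) ⬝ᵥ ((1 - (Aᴴ * A + Cᴴ * C)) *ᵥ y n)).re := by
          have := (Complex.le_def.mp hq).1
          simpa using this
        have hle : (g (n + 1)).re ≤ (g n).re := by
          rw [hstep n, Complex.add_re]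
          linarith
        exact hle.trans ih
    have hcont : Continuous (fun M : Matrix (Fin ν) (Fin ν) ℂ
        => star (M *ᵥ x) ⬝ᵥ ((1 - W) *ᵥ (M *ᵥ x))) := by
      have h1 : Continuous (fun M : Matrix (Fin ν) (Fin ν) ℂ => M *ᵥ x) :=
        continuous_id.matrix_mulVec continuous_const
      exact (h1.star).dotProduct (continuous_const.matrix_mulVec h1)
    have hg0 : Tendsto g atTop (nhds (star ((0 : Matrix (Fin ν) (Fin ν) ℂ) *ᵥ x)
        ⬝ᵥ ((1 - W) *ᵥ ((0 : Matrix (Fin ν) (Fin ν) ℂ) *ᵥ x)))) := by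
      have := (hcont.tendsto 0).comp (aux_pow_tendsto A hA)
      simpa [hg, hy, Function.comp_def] using this
    have hg0' : Tendsto g atTop (nhds 0) := by
      simpa using hg0
    have hre : Tendsto (fun n => (g n).re) atTop (nhds 0) := by
      have := (Complex.continuous_re.tendsto (0 : ℂ)).comp hg0'
      simpa [Function.comp_def] using this
    have h0 : 0 ≤ (g 0).re := le_of_tendsto hre (Filter.Eventually.of_forall hmono)
    have hstar : star (g 0) = g 0 := by
      rw [hg]
      have : star (star (y 0) ⬝ᵥ ((1 - W) *ᵥ y 0))
          = star ((1 - W) *ᵥ y 0) ⬝ᵥ y 0 := by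
        rw [← Matrix.star_dotProduct_star, star_star]
      rw [this, Matrix.star_mulVec, hH.eq, ← Matrix.dotProduct_mulVec]
    have him : (g 0).im = 0 := by
      have h := congrArg Complex.im hstar
      simp only [Complex.star_def, Complex.conj_im] at h
      linarith
    have hg00 : g 0 = star x ⬝ᵥ ((1 - W) *ᵥ x) := by
      rw [hg]
      simp [hy]
    rw [← hg00]
    rw [Complex.le_def]
    constructor
    · simpa using h0
    · simpa using him.symm
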